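/- For any pair of elements X, Y ∈ N satisfying X·(σ•X) = 1 and Y·(τ•Y)·(τ²•Y) = 1, there exists a 1-cocycle u ∈ Z¹(PSL(2,ℤ), N) with u(σ) = X and u(τ) = Y. -/

import Mathlib

/-- A 1-cocycle of `G` in a (possibly noncommutative) group `N` on which `G`
acts on the left by group automorphisms: `u (g₁ * g₂) = u g₁ * g₁ • u g₂`. -/
def IsCocycle {G N : Type*} [Group G] [Group N] [MulDistribMulAction G N]
    (u : G → N) : Prop :=
  ∀ g₁ g₂ : G, u (g₁ * g₂) = u g₁ * g₁ • u g₂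

/-- Two maps `u v : G → N` are cohomologous if there is `n : N` with
`v g = n⁻¹ * u g * g • n` for all `g`. -/
def Cohomologous {G N : Type*} [Group G] [Group N] [MulDistribMulAction G N]
    (u v : G → N) : Prop :=
  ∃ n : N, ∀ g : G, v g = n⁻¹ * u g * g • n

/-- The group `SL(2,ℤ)`. -/
abbrev SL2Z := Matrix.SpecialLinearGroup (Fin 2) ℤ

/-- The group `PSL(2,ℤ)`, the quotient of `SL(2,ℤ)` by its center `{±1}`. -/
abbrev PSL2Z := SL2Z ⧸ Subgroup.center SL2Z

/-- The image `σ` of the matrix `((0,-1),(1,0))` in `PSL(2,ℤ)`. -/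
def pslSigma : PSL2Z :=
  QuotientGroup.mk ⟨!![0, -1; 1, 0], by norm_num [Matrix.det_fin_two_of]⟩

/-- The image `τ` of the matrix `((0,-1),(1,-1))` in `PSL(2,ℤ)`. -/
def pslTau : PSL2Z :=
  QuotientGroup.mk ⟨!![0, -1; 1, -1], by norm_num [Matrix.det_fin_two_of]⟩

open Matrix ModularGroup Matrix.SpecialLinearGroup UpperHalfPlane Subgroup Monoid

noncomputable section

namespace ShimuraAux

/-! ### Basic matrix identities -/

lemma mk_S : (QuotientGroup.mk S : PSL2Z) = pslSigma := rfl

def tauSL : SL2Z := ⟨!![0, -1; 1, -1], by norm_num [Matrix.det_fin_two_of]⟩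

lemma mk_tau : (QuotientGroup.mk tauSL : PSL2Z) = pslTau := rfl

lemma S_mul_S : S * S = (-1 : SL2Z) := Subtype.ext S_mul_S_eq

lemma tauSL_eq : tauSL = S * T⁻¹ := by
  apply Subtype.ext
  rw [Matrix.SpecialLinearGroup.coe_mul, coe_S, coe_T_inv]
  norm_num [tauSL, Matrix.mul_fin_two]

lemma tauSL_mul_T : tauSL * T = S := by
  apply Subtype.ext
  rw [Matrix.SpecialLinearGroup.coe_mul, coe_S, coe_T]
  norm_num [tauSL, Matrix.mul_fin_two]

lemma tauSL_cube : tauSL * tauSL * tauSL = 1 := by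
  apply Subtype.ext
  rw [Matrix.SpecialLinearGroup.coe_mul, Matrix.SpecialLinearGroup.coe_mul, Matrix.SpecialLinearGroup.coe_one]
  rw [Matrix.one_fin_two]; norm_num [tauSL, Matrix.mul_fin_two]

lemma neg_one_mem_center : (-1 : SL2Z) ∈ Subgroup.center SL2Z := by
  rw [Subgroup.mem_center_iff]
  intro g
  apply Subtype.ext
  simp [SpecialLinearGroup.coe_mul]

lemma sigma_sq : pslSigma ^ 2 = 1 := by
  rw [← mk_S, sq, ← QuotientGroup.mk_mul, S_mul_S, QuotientGroup.eq_one_iff]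
  exact neg_one_mem_center

lemma tau_cube : pslTau ^ 3 = 1 := by
  rw [← mk_tau, pow_succ, pow_two, ← QuotientGroup.mk_mul, ← QuotientGroup.mk_mul,
    tauSL_cube]
  rfl

/-! ### The action of `PSL(2,ℤ)` on the upper half plane -/

lemma eq_one_or_neg_one_of_mem_center {A : SL2Z} (hA : A ∈ Subgroup.center SL2Z) :
    A = 1 ∨ A = -1 := by
  obtain ⟨r, hr, hr'⟩ := Matrix.SpecialLinearGroup.mem_center_iff.mp hA
  simp only [Fintype.card_fin] at hr
  rcases Int.isUnit_iff.mp (IsUnit.of_mul_eq_one r (by rw [← sq]; exact hr)) with h | h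
  · left
    apply Subtype.ext
    rw [← hr', h]
    simp
  · right
    apply Subtype.ext
    rw [← hr', h]
    simp [Matrix.scalar]

/-- The permutation action of `PSL(2,ℤ)` on the upper half plane. -/
def pslPerm : PSL2Z →* Equiv.Perm ℍ :=
  QuotientGroup.lift (Subgroup.center SL2Z) (MulAction.toPermHom SL2Z ℍ) (by
    intro A hA
    rcases eq_one_or_neg_one_of_mem_center hA with rfl | rfl
    · exact map_one (MulAction.toPermHom SL2Z ℍ)
    · ext z
      simpa using ModularGroup.SL_neg_smul 1 z)

instance : MulAction PSL2Z ℍ := MulAction.compHom ℍ pslPerm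

lemma mk_smul (A : SL2Z) (z : ℍ) : (QuotientGroup.mk A : PSL2Z) • z = A • z := rfl

lemma S_smul_re (z : ℍ) : (S • z).re = -z.re / Complex.normSq z := by
  rw [UpperHalfPlane.modular_S_smul]
  show ((-(z : ℂ))⁻¹).re = _
  rw [Complex.inv_re, Complex.normSq_neg]
  simp [neg_div]

lemma sigma_smul_re_neg {z : ℍ} (h : 0 < z.re) : (pslSigma • z).re < 0 := by
  rw [← mk_S, mk_smul, S_smul_re]
  exact div_neg_of_neg_of_pos (neg_neg_iff_pos.mpr h) z.normSq_pos

lemma T_inv_smul (z : ℍ) : (T⁻¹ • z : ℍ) = ((-1 : ℝ) +ᵥ z) := by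
  simpa using UpperHalfPlane.modular_T_zpow_smul z (-1)

lemma tau_smul_re_pos {z : ℍ} (h : z.re < 0) : 0 < (pslTau • z).re := by
  rw [← mk_tau, mk_smul, tauSL_eq, mul_smul, T_inv_smul, S_smul_re]
  apply div_pos
  · simp only [UpperHalfPlane.vadd_re]
    linarith
  · exact ((-1 : ℝ) +ᵥ z).normSq_pos

lemma S_inv_eq : S⁻¹ = -S := by
  rw [eq_comm, eq_inv_iff_mul_eq_one]
  apply Subtype.ext
  have h := congrArg (fun A : SL2Z => (A : Matrix (Fin 2) (Fin 2) ℤ)) S_mul_S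
  simp only [Matrix.SpecialLinearGroup.coe_mul] at h
  simp [Matrix.SpecialLinearGroup.coe_mul, h, Matrix.one_fin_two]

lemma tau_sq_smul_re_pos {z : ℍ} (h : z.re < 0) : 0 < (pslTau ^ 2 • z).re := by
  have h2 : pslTau ^ 2 = QuotientGroup.mk tauSL⁻¹ := by
    rw [← mk_tau, sq, ← QuotientGroup.mk_mul,
      eq_inv_of_mul_eq_one_left tauSL_cube]
  rw [h2, mk_smul, tauSL_eq, _root_.mul_inv_rev, inv_inv, mul_smul, S_inv_eq,
    ModularGroup.SL_neg_smul, UpperHalfPlane.modular_T_smul]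
  have hS : 0 < (S • z).re := by
    rw [S_smul_re]
    exact div_pos (by linarith) z.normSq_pos
  simp only [UpperHalfPlane.vadd_re]
  linarith

/-! ### `S` and `T` generate -/

lemma mem_closure_ST (A : SL2Z) : A ∈ Subgroup.closure ({S, T} : Set SL2Z) := by
  have hS : S ∈ Subgroup.closure ({S, T} : Set SL2Z) := Subgroup.subset_closure (by simp)
  have hT : T ∈ Subgroup.closure ({S, T} : Set SL2Z) := Subgroup.subset_closure (by simp)
  generalize hn : (A 1 0).natAbs = n
  induction n using Nat.strong_induction_on generalizing A with
  | _ n ih =>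
  rcases Nat.eq_zero_or_pos n with rfl | hpos
  · -- lower-left entry is zero
    have hc : A 1 0 = 0 := Int.natAbs_eq_zero.mp hn
    have hdet : A 0 0 * A 1 1 - A 0 1 * A 1 0 = 1 := by
      have h2 := A.2
      rw [Matrix.det_fin_two] at h2
      exact h2
    rw [hc, mul_zero, sub_zero] at hdet
    rcases Int.eq_one_or_neg_one_of_mul_eq_one' hdet with ⟨ha, hd⟩ | ⟨ha, hd⟩
    · have hA : A = T ^ (A 0 1) := by
        apply Subtype.ext
        rw [coe_T_zpow]
        conv_lhs => rw [Matrix.eta_fin_two A.1]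
        rw [ha, hc, hd]
      rw [hA]; exact zpow_mem hT _
    · have hA : A = S * S * T ^ (-(A 0 1)) := by
        apply Subtype.ext
        rw [S_mul_S, Matrix.SpecialLinearGroup.coe_mul, coe_T_zpow]
        conv_lhs => rw [Matrix.eta_fin_two A.1]
        rw [ha, hc, hd]
        norm_num [Matrix.mul_fin_two]
      rw [hA]
      exact mul_mem (mul_mem hS hS) (zpow_mem hT _)
  · -- lower-left entry nonzero: Euclidean step
    have hc : A 1 0 ≠ 0 := fun h => by simp [h] at hn; omega
    set q := A 0 0 / A 1 0 with hq
    set B := S * (T ^ (-q) * A) with hB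
    have hB10 : B 1 0 = A 0 0 % A 1 0 := by
      have h3 : B 1 0 = A 0 0 - q * A 1 0 := by
        simp [hB, SpecialLinearGroup.coe_mul, coe_S, coe_T_zpow, Matrix.mul_apply,
          Fin.sum_univ_two, Matrix.vecMul, dotProduct]
        ring
      rw [h3, Int.emod_def]
      ring
    have hlt : (B 1 0).natAbs < n := by
      rw [hB10, ← hn]
      have h1 : 0 ≤ A 0 0 % A 1 0 := Int.emod_nonneg _ hc
      have h2 : A 0 0 % A 1 0 < |A 1 0| := Int.emod_lt_abs _ hc
      rw [Int.abs_eq_natAbs] at h2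
      omega
    have hBmem := ih _ hlt B rfl
    have hA : A = T ^ q * (S⁻¹ * B) := by rw [hB]; group
    rw [hA]
    exact mul_mem (zpow_mem hT _) (mul_mem (inv_mem hS) hBmem)

lemma closure_sigma_tau : Subgroup.closure ({pslSigma, pslTau} : Set PSL2Z) = ⊤ := by
  rw [eq_top_iff']
  intro x
  obtain ⟨A, rfl⟩ := QuotientGroup.mk_surjective x
  have hσ : pslSigma ∈ Subgroup.closure ({pslSigma, pslTau} : Set PSL2Z) :=
    Subgroup.subset_closure (by simp)
  have hτ : pslTau ∈ Subgroup.closure ({pslSigma, pslTau} : Set PSL2Z) :=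
    Subgroup.subset_closure (by simp)
  refine Subgroup.closure_induction ?_ ?_ ?_ ?_ (mem_closure_ST A)
    (p := fun A _ => (QuotientGroup.mk A : PSL2Z) ∈
      Subgroup.closure ({pslSigma, pslTau} : Set PSL2Z))
  · rintro B (rfl | rfl)
    · exact hσ
    · have hTS : tauSL⁻¹ * S = T := by rw [← tauSL_mul_T]; group
      have hmkT : (QuotientGroup.mk T : PSL2Z) = pslTau⁻¹ * pslSigma := by
        rw [← mk_tau, ← mk_S, ← QuotientGroup.mk_inv, ← QuotientGroup.mk_mul, hTS]
      rw [hmkT]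
      exact mul_mem (inv_mem hτ) hσ
  · exact one_mem _
  · intro a b _ _ ha hb
    rw [QuotientGroup.mk_mul]
    exact mul_mem ha hb
  · intro a _ ha
    rw [QuotientGroup.mk_inv]
    exact inv_mem ha

/-! ### Homomorphisms from `ZMod n` -/

/-- The hom out of `Multiplicative (ZMod n)` sending the generator to `g`, given `g ^ n = 1`. -/
def powHom {G : Type*} [Group G] (n : ℕ) (g : G) (h : g ^ (n : ℤ) = 1) :
    Multiplicative (ZMod n) →* G :=
  AddMonoidHom.toMultiplicativeLeft
    (ZMod.lift n ⟨(zmultiplesHom (Additive G)) (Additive.ofMul g), by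
      simp only [zmultiplesHom_apply]
      exact congrArg Additive.ofMul h⟩)

lemma powHom_intCast {G : Type*} [Group G] (n : ℕ) (g : G) (h : g ^ (n : ℤ) = 1) (k : ℤ) :
    powHom n g h (Multiplicative.ofAdd ((k : ZMod n))) = g ^ k := by
  simp [powHom, AddMonoidHom.coe_toMultiplicativeLeft]

/-! ### The free product decomposition -/

/-- The family `C2`, `C3` indexed by `Bool`. -/
abbrev Hfam : Bool → Type := fun b => Multiplicative (ZMod (bif b then 3 else 2))

lemma sigma_zpow_two : pslSigma ^ ((2 : ℕ) : ℤ) = 1 := by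
  rw [zpow_natCast]; exact sigma_sq

lemma tau_zpow_three : pslTau ^ ((3 : ℕ) : ℤ) = 1 := by
  rw [zpow_natCast]; exact tau_cube

/-- The canonical homomorphisms `C2 → PSL2Z`, `C3 → PSL2Z`. -/
def fgen : ∀ b : Bool, Hfam b →* PSL2Z := fun b =>
  match b with
  | false => powHom 2 pslSigma sigma_zpow_two
  | true => powHom 3 pslTau tau_zpow_three

lemma zmod2_cases : ∀ k : ZMod 2, k ≠ 0 → k = ((1 : ℤ) : ZMod 2) := by decide

lemma zmod3_cases : ∀ k : ZMod 3, k ≠ 0 →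
    k = ((1 : ℤ) : ZMod 3) ∨ k = ((2 : ℤ) : ZMod 3) := by decide

/-- The ping-pong sets. -/
def Xpp : Bool → Set ℍ := fun b => bif b then {z | 0 < z.re} else {z | z.re < 0}

lemma lift_fgen_bijective : Function.Bijective (CoprodI.lift fgen) := by
  constructor
  · apply CoprodI.lift_injective_of_ping_pong fgen ?_ Xpp ?_ ?_ ?_
    · right
      exact ⟨true, by simp [Hfam]⟩
    · intro b
      cases b
      · exact ⟨UpperHalfPlane.mk ⟨-1, 1⟩ (by norm_num), show (-1 : ℝ) < 0 by norm_num⟩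
      · exact ⟨UpperHalfPlane.mk ⟨1, 1⟩ (by norm_num), show (0 : ℝ) < 1 by norm_num⟩
    · have key : Disjoint ({z : ℍ | z.re < 0}) ({z : ℍ | 0 < z.re}) := by
        rw [Set.disjoint_left]
        intro z hz hz'
        simp only [Set.mem_setOf_eq] at hz hz'
        linarith
      intro i j hij
      cases i <;> cases j
      · exact absurd rfl hij
      · exact key
      · exact key.symm
      · exact absurd rfl hij
    · intro i j hij
      cases i
      · -- i = false : the sigma side
        intro h hne
        have hj : j = true := by cases j <;> simp_all
        subst hj
        obtain ⟨k, hk⟩ : ∃ k : ZMod 2, h = Multiplicative.ofAdd k := ⟨h.toAdd, rfl⟩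
        have hk1 : k = ((1 : ℤ) : ZMod 2) :=
          zmod2_cases k (fun h0 => hne (by simp [hk, h0]))
        intro z hz
        obtain ⟨w, hw, rfl⟩ := hz
        have hval : fgen false h = pslSigma := by
          rw [hk, hk1]
          exact (powHom_intCast 2 pslSigma sigma_zpow_two 1).trans (zpow_one _)
        rw [hval]
        simp only [Xpp, Bool.cond_false, Set.mem_setOf_eq]
        exact sigma_smul_re_neg hw
      · -- i = true : the tau side
        intro h hne
        have hj : j = false := by cases j <;> simp_all
        subst hj
        obtain ⟨k, hk⟩ : ∃ k : ZMod 3, h = Multiplicative.ofAdd k := ⟨h.toAdd, rfl⟩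
        have hk1 : k = ((1 : ℤ) : ZMod 3) ∨ k = ((2 : ℤ) : ZMod 3) :=
          zmod3_cases k (fun h0 => hne (by simp [hk, h0]))
        intro z hz
        obtain ⟨w, hw, rfl⟩ := hz
        simp only [Xpp, Bool.cond_false, Set.mem_setOf_eq] at hw
        simp only [Xpp, Bool.cond_true, Set.mem_setOf_eq]
        rcases hk1 with hk1 | hk1
        · have hval : fgen true h = pslTau := by
            rw [hk, hk1]
            exact (powHom_intCast 3 pslTau tau_zpow_three 1).trans (zpow_one _)
          rw [hval]
          exact tau_smul_re_pos hw
        · have hval : fgen true h = pslTau ^ 2 := by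
            rw [hk, hk1]
            exact (powHom_intCast 3 pslTau tau_zpow_three 2).trans
              (by rw [zpow_two, sq])
          rw [hval]
          exact tau_sq_smul_re_pos hw
  · rw [← MonoidHom.range_eq_top, eq_top_iff, ← closure_sigma_tau,
      Subgroup.closure_le]
    rintro x (rfl | rfl)
    · refine ⟨CoprodI.of (Multiplicative.ofAdd ((1 : ℤ) : ZMod 2) : Hfam false), ?_⟩
      rw [CoprodI.lift_of]
      exact (powHom_intCast 2 pslSigma sigma_zpow_two 1).trans (zpow_one _)
    · refine ⟨CoprodI.of (Multiplicative.ofAdd ((1 : ℤ) : ZMod 3) : Hfam true), ?_⟩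
      rw [CoprodI.lift_of]
      exact (powHom_intCast 3 pslTau tau_zpow_three 1).trans (zpow_one _)

/-- `PSL(2,ℤ)` is the free product `C2 * C3`. -/
def pslEquiv : CoprodI Hfam ≃* PSL2Z :=
  MulEquiv.ofBijective (CoprodI.lift fgen) lift_fgen_bijective

end ShimuraAux

end

theorem cocycle_exists_of_shimura_eichler {N : Type*} [Group N]
    [MulDistribMulAction PSL2Z N]
    (X Y : N) (hX : X * pslSigma • X = 1)
    (hY : Y * pslTau • Y * pslTau ^ 2 • Y = 1) :
    ∃ u : PSL2Z → N, IsCocycle u ∧ u pslSigma = X ∧ u pslTau = Y := by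
  classical
  open ShimuraAux SemidirectProduct Monoid in
  -- the semidirect product
  set φ : PSL2Z →* MulAut N := MulDistribMulAction.toMulAut PSL2Z N with hφ
  set s : N ⋊[φ] PSL2Z := ⟨X, pslSigma⟩ with hsdef
  set t : N ⋊[φ] PSL2Z := ⟨Y, pslTau⟩ with htdef
  have hs : s ^ ((2 : ℕ) : ℤ) = 1 := by
    rw [zpow_natCast, sq]
    refine SemidirectProduct.ext ?_ ?_
    · show X * φ pslSigma X = 1
      exact hX
    · show pslSigma * pslSigma = 1
      rw [← sq]; exact sigma_sq
  have ht : t ^ ((3 : ℕ) : ℤ) = 1 := by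
    rw [zpow_natCast, pow_succ, sq]
    refine SemidirectProduct.ext ?_ ?_
    · show (Y * φ pslTau Y) * φ (pslTau * pslTau) Y = 1
      have hsq : φ (pslTau * pslTau) Y = pslTau ^ 2 • Y := by
        rw [sq]
        rfl
      rw [hsq]
      exact hY
    · show pslTau * pslTau * pslTau = 1
      rw [← sq, ← pow_succ]; exact tau_cube
  set L : CoprodI Hfam →* N ⋊[φ] PSL2Z :=
    CoprodI.lift (fun b =>
      match b with
      | false => powHom 2 s hs
      | true => powHom 3 t ht) with hL
  set Φ : PSL2Z → N ⋊[φ] PSL2Z := fun g => L (pslEquiv.symm g) with hΦ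
  have hcompat : SemidirectProduct.rightHom.comp L = CoprodI.lift fgen := by
    refine CoprodI.ext_hom _ _ ?_
    intro i
    ext x
    obtain ⟨k, hk⟩ := ZMod.intCast_surjective (Multiplicative.toAdd x)
    have hx : x = Multiplicative.ofAdd ((k : ZMod _)) := by
      rw [hk]
      rfl
    rw [hx]
    cases i
    · have hLs : L (CoprodI.of (M := Hfam) (i := false)
          (Multiplicative.ofAdd ((k : ZMod 2)))) = s ^ k := by
        rw [CoprodI.lift_of]
        exact powHom_intCast 2 s hs k
      show SemidirectProduct.rightHom (L (CoprodI.of (M := Hfam) (i := false)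
        (Multiplicative.ofAdd ((k : ZMod 2))))) = CoprodI.lift fgen (CoprodI.of (M := Hfam)
        (i := false) (Multiplicative.ofAdd ((k : ZMod 2))))
      rw [hLs, map_zpow, CoprodI.lift_of]
      show pslSigma ^ k = _
      exact (powHom_intCast 2 pslSigma sigma_zpow_two k).symm
    · have hLt : L (CoprodI.of (M := Hfam) (i := true)
          (Multiplicative.ofAdd ((k : ZMod 3)))) = t ^ k := by
        rw [CoprodI.lift_of]
        exact powHom_intCast 3 t ht k
      show SemidirectProduct.rightHom (L (CoprodI.of (M := Hfam) (i := true)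
        (Multiplicative.ofAdd ((k : ZMod 3))))) = CoprodI.lift fgen (CoprodI.of (M := Hfam)
        (i := true) (Multiplicative.ofAdd ((k : ZMod 3))))
      rw [hLt, map_zpow, CoprodI.lift_of]
      show pslTau ^ k = _
      exact (powHom_intCast 3 pslTau tau_zpow_three k).symm
  have hright : ∀ g : PSL2Z, (Φ g).right = g := by
    intro g
    show SemidirectProduct.rightHom (L (pslEquiv.symm g)) = g
    rw [← MonoidHom.comp_apply, hcompat]
    exact pslEquiv.apply_symm_apply g
  refine ⟨fun g => (Φ g).left, ?_, ?_, ?_⟩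
  · intro g₁ g₂
    have hmul : Φ (g₁ * g₂) = Φ g₁ * Φ g₂ := by
      show L (pslEquiv.symm (g₁ * g₂)) = L (pslEquiv.symm g₁) * L (pslEquiv.symm g₂)
      rw [_root_.map_mul pslEquiv.symm, _root_.map_mul L]
    show (Φ (g₁ * g₂)).left = (Φ g₁).left * g₁ • (Φ g₂).left
    rw [hmul, SemidirectProduct.mul_left, hright g₁]
    rfl
  · set x0 : CoprodI Hfam :=
      CoprodI.of (M := Hfam) (i := false) (Multiplicative.ofAdd ((1 : ℤ) : ZMod 2)) with hx0
    have h0 : pslEquiv x0 = pslSigma := by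
      show CoprodI.lift fgen x0 = pslSigma
      rw [hx0, CoprodI.lift_of]
      exact (powHom_intCast 2 pslSigma sigma_zpow_two 1).trans (zpow_one _)
    have h1 : pslEquiv.symm pslSigma = x0 := by
      rw [← h0, MulEquiv.symm_apply_apply]
    show (L (pslEquiv.symm pslSigma)).left = X
    rw [h1]
    have hLs : L x0 = s := by
      rw [hx0, CoprodI.lift_of]
      exact (powHom_intCast 2 s hs 1).trans (zpow_one _)
    rw [hLs]
  · set x1 : CoprodI Hfam :=
      CoprodI.of (M := Hfam) (i := true) (Multiplicative.ofAdd ((1 : ℤ) : ZMod 3)) with hx1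
    have h0 : pslEquiv x1 = pslTau := by
      show CoprodI.lift fgen x1 = pslTau
      rw [hx1, CoprodI.lift_of]
      exact (powHom_intCast 3 pslTau tau_zpow_three 1).trans (zpow_one _)
    have h1 : pslEquiv.symm pslTau = x1 := by
      rw [← h0, MulEquiv.symm_apply_apply]
    show (L (pslEquiv.symm pslTau)).left = Y
    rw [h1]
    have hLt : L x1 = t := by
      rw [hx1, CoprodI.lift_of]
      exact (powHom_intCast 3 t ht 1).trans (zpow_one _)
    rw [hLt]
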